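/- If C is a nonempty open or closed convex subset of a finite-dimensional real vector space V, then a vector v belongs to the recession cone lim(C) = {x : C + x ⊆ C} if and only if there exist nets (or sequences) t_j ≥ 0 with t_j → 0 and c_j ∈ C such that t_j • c_j → v. -/

import Mathlib

open Filter Topology

theorem recession_cone_mem_iff {V : Type*} [NormedAddCommGroup V] [NormedSpace ℝ V]
    [FiniteDimensional ℝ V]
    (C : Set V) (hconv : Convex ℝ C) (hne : C.Nonempty)
    (hoc : IsOpen C ∨ IsClosed C) (v : V) :
    (∀ c ∈ C, c + v ∈ C) ↔
      ∃ (t : ℕ → ℝ) (c : ℕ → V), (∀ n, 0 ≤ t n) ∧ (∀ n, c n ∈ C) ∧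
        Tendsto t atTop (𝓝 0) ∧ Tendsto (fun n => t n • c n) atTop (𝓝 v) := by
  constructor
  · intro h
    obtain ⟨c₀, hc₀⟩ := hne
    have key : ∀ n : ℕ, c₀ + (n : ℝ) • v ∈ C := by
      intro n
      induction n with
      | zero => simpa using hc₀
      | succ k ih =>
        have := h _ ih
        push_cast
        convert this using 1
        module
    refine ⟨fun n => 1 / ((n : ℝ) + 1), fun n => c₀ + ((n : ℝ) + 1) • v, ?_, ?_, ?_, ?_⟩
    · intro n; positivity
    · intro n; simpa using key (n + 1)
    · exact tendsto_one_div_add_atTop_nhds_zero_nat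
    · have h1 : Tendsto (fun n : ℕ => (1 / ((n : ℝ) + 1)) • c₀ + v) atTop (𝓝 v) := by
        have := ((tendsto_one_div_add_atTop_nhds_zero_nat :
          Tendsto (fun n : ℕ => 1 / ((n : ℝ) + 1)) atTop (𝓝 0)).smul_const c₀).add
          (tendsto_const_nhds : Tendsto (fun _ : ℕ => v) atTop (𝓝 v))
        simpa using this
      refine h1.congr fun n => ?_
      have hn : ((n : ℝ) + 1) ≠ 0 := by positivity
      simp only [one_div]
      rw [smul_add, smul_smul, inv_mul_cancel₀ hn, one_smul]
  · rintro ⟨t, c, ht0, hc, htlim, hlim⟩ c' hc'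
    have hclosure : ∀ s : ℝ, 0 ≤ s → c' + s • v ∈ closure C := by
      intro s hs
      have hev : ∀ᶠ n in atTop, (1 - s * t n) • c' + (s * t n) • c n ∈ C := by
        have hlt : ∀ᶠ n in atTop, s * t n < 1 := by
          have : Tendsto (fun n => s * t n) atTop (𝓝 0) := by
            simpa using htlim.const_mul s
          exact this.eventually_lt_const one_pos
        filter_upwards [hlt] with n hn
        exact hconv hc' (hc n) (by linarith) (mul_nonneg hs (ht0 n)) (by ring)
      have hlim2 : Tendsto (fun n => (1 - s * t n) • c' + (s * t n) • c n) atTop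
          (𝓝 (c' + s • v)) := by
        have h1 : Tendsto (fun n => (1 - s * t n : ℝ)) atTop (𝓝 1) := by
          have : Tendsto (fun n => s * t n) atTop (𝓝 0) := by
            simpa using htlim.const_mul s
          simpa using tendsto_const_nhds.sub this
        have h2 : Tendsto (fun n => (s * t n) • c n) atTop (𝓝 (s • v)) := by
          have : Tendsto (fun n => s • (t n • c n)) atTop (𝓝 (s • v)) := hlim.const_smul s
          simpa [smul_smul] using this
        have := (h1.smul_const c').add h2
        simpa using this
      exact mem_closure_of_tendsto hlim2 hev
    rcases hoc with hop | hcls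
    · have h2v : c' + (2 : ℝ) • v ∈ closure C := hclosure 2 (by norm_num)
      have hci : c' ∈ interior C := by rwa [hop.interior_eq]
      have : (1 / 2 : ℝ) • c' + (1 / 2 : ℝ) • (c' + (2 : ℝ) • v) ∈ interior C :=
        hconv.combo_interior_closure_mem_interior hci h2v (by norm_num) (by norm_num)
          (by norm_num)
      have heq : (1 / 2 : ℝ) • c' + (1 / 2 : ℝ) • (c' + (2 : ℝ) • v) = c' + v := by module
      rw [heq] at this
      exact interior_subset this
    · have := hclosure 1 zero_le_one
      rwa [one_smul, hcls.closure_eq] at this
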